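/- Impossibility of certain bi-clusters: there is no surjective bimodal p-morphism from any product of difference frames (U,≠_U) × (V,≠_V) onto a finite bi-cluster C that contains a point with R_h reflexive and R_v irreflexive, a point with R_h irreflexive and R_v reflexive, but no point that is both R_h- and R_v-reflexive. (Combining the constraints |U| ≥ 2|V| and |V| ≥ 2|U| forces U, V empty, contradicting surjectivity onto nonempty C.) -/

import Mathlib

/-- Horizontal relation of the product of two difference frames. -/
def ProdH {U V : Type u} (p q : U × V) : Prop := p.1 ≠ q.1 ∧ p.2 = q.2

/-- Vertical relation of the product of two difference frames. -/
def ProdV {U V : Type u} (p q : U × V) : Prop := p.2 ≠ q.2 ∧ p.1 = q.1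

/-- `f` is a surjective bimodal p-morphism from the product of the difference
frames on `U` and `V` onto the bimodal frame `(C, Rh, Rv)`. -/
def IsBiPMorphism {U V : Type u} {C : Type v} (Rh Rv : C → C → Prop)
    (f : U × V → C) : Prop :=
  Function.Surjective f ∧
  (∀ p q : U × V, ProdH p q → Rh (f p) (f q)) ∧
  (∀ p q : U × V, ProdV p q → Rv (f p) (f q)) ∧
  (∀ (p : U × V) (c : C), Rh (f p) c → ∃ q : U × V, ProdH p q ∧ f q = c) ∧
  (∀ (p : U × V) (c : C), Rv (f p) c → ∃ q : U × V, ProdV p q ∧ f q = c)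

theorem stmt_9 (C : Type v) [Finite C] (Rh Rv : C → C → Prop)
    (hbc : ∀ c c' : C, c ≠ c' → Rh c c' ∧ Rv c c')
    (h1 : ∃ c : C, Rh c c ∧ ¬ Rv c c)
    (h2 : ∃ c : C, ¬ Rh c c ∧ Rv c c)
    (h3 : ¬ ∃ c : C, Rh c c ∧ Rv c c) :
    ∀ (U V : Type u) (f : U × V → C), ¬ IsBiPMorphism Rh Rv f := by
  intro U V f hf
  obtain ⟨hsurj, fwdH, fwdV, backH, backV⟩ := hf
  obtain ⟨c1, hc1h, hc1v⟩ := h1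
  obtain ⟨c2, hc2h, hc2v⟩ := h2
  obtain ⟨p0, hp0⟩ := hsurj c1
  haveI hU : Nonempty U := ⟨p0.1⟩
  haveI hV : Nonempty V := ⟨p0.2⟩
  set n := Nat.card C with hn
  have hirr : ∀ c : C, Rh c c → ¬ Rv c c := fun c h hv => h3 ⟨c, h, hv⟩
  -- at most one c1 per column, at most one c2 per row
  have oneCol : ∀ (u : U) (v w : V), f (u, v) = c1 → f (u, w) = c1 → v = w := by
    intro u v w hv hw
    by_contra hne
    have h := fwdV (u, v) (u, w) ⟨hne, rfl⟩
    rw [hv, hw] at h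
    exact hc1v h
  have oneRow2 : ∀ (v : V) (u w : U), f (u, v) = c2 → f (w, v) = c2 → u = w := by
    intro v u w hu hw
    by_contra hne
    have h := fwdH (u, v) (w, v) ⟨hne, rfl⟩
    rw [hu, hw] at h
    exact hc2h h
  -- every row has two c1 cells
  have rowc1 : ∀ v : V, ∃ u, f (u, v) = c1 := by
    intro v
    by_cases h : f (p0.1, v) = c1
    · exact ⟨p0.1, h⟩
    · obtain ⟨⟨qu, qv⟩, ⟨hne, hq2⟩, hqc⟩ := backH (p0.1, v) c1 (hbc _ _ h).1
      cases hq2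
      exact ⟨qu, hqc⟩
  have rowc1two : ∀ v : V, ∃ a b : U, a ≠ b ∧ f (a, v) = c1 ∧ f (b, v) = c1 := by
    intro v
    obtain ⟨u, hu⟩ := rowc1 v
    obtain ⟨⟨qu, qv⟩, ⟨hne, hq2⟩, hqc⟩ := backH (u, v) c1 (by rw [hu]; exact hc1h)
    cases hq2
    exact ⟨u, qu, hne, hu, hqc⟩
  -- every column has two c2 cells
  have colc2 : ∀ u : U, ∃ v, f (u, v) = c2 := by
    intro u
    by_cases h : f (u, p0.2) = c2
    · exact ⟨p0.2, h⟩
    · obtain ⟨⟨qu, qv⟩, ⟨hne, hq2⟩, hqc⟩ := backV (u, p0.2) c2 (hbc _ _ h).2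
      cases hq2
      exact ⟨qv, hqc⟩
  have colc2two : ∀ u : U, ∃ a b : V, a ≠ b ∧ f (u, a) = c2 ∧ f (u, b) = c2 := by
    intro u
    obtain ⟨v, hv⟩ := colc2 u
    obtain ⟨⟨qu, qv⟩, ⟨hne, hq2⟩, hqc⟩ := backV (u, v) c2 (by rw [hv]; exact hc2v)
    cases hq2
    exact ⟨v, qv, hne, hv, hqc⟩
  -- injection V × Bool → U
  choose a b hab ha hb using rowc1two
  have F1inj : Function.Injective (fun x : V × Bool => if x.2 then a x.1 else b x.1) := by
    rintro ⟨v, s⟩ ⟨w, t⟩ h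
    simp only at h
    have hv : f ((if s then a v else b v), v) = c1 := by
      cases s
      · simpa using hb v
      · simpa using ha v
    have hw : f ((if t then a w else b w), w) = c1 := by
      cases t
      · simpa using hb w
      · simpa using ha w
    rw [h] at hv
    have hvw : v = w := oneCol _ _ _ hv hw
    subst hvw
    cases s <;> cases t <;> simp only [if_true, if_false] at h
    · rfl
    · exact absurd h.symm (hab v)
    · exact absurd h (hab v)
    · rfl
  -- injection U × Bool → V
  choose a2 b2 hab2 ha2 hb2 using colc2two
  have F2inj : Function.Injective (fun x : U × Bool => if x.2 then a2 x.1 else b2 x.1) := by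
    rintro ⟨v, s⟩ ⟨w, t⟩ h
    simp only at h
    have hv : f (v, (if s then a2 v else b2 v)) = c2 := by
      cases s
      · simpa using hb2 v
      · simpa using ha2 v
    have hw : f (w, (if t then a2 w else b2 w)) = c2 := by
      cases t
      · simpa using hb2 w
      · simpa using ha2 w
    rw [h] at hv
    have hvw : v = w := oneRow2 _ _ _ hv hw
    subst hvw
    cases s <;> cases t <;> simp only [if_true, if_false] at h
    · rfl
    · exact absurd h.symm (hab2 v)
    · exact absurd h (hab2 v)
    · rfl
  -- n + 1 distinct rows force U to be finite
  have key : ∀ g : Fin (n + 1) → V, Function.Injective g → Finite U := by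
    intro g hg
    have exK : ∀ u : U, ∃ i : Fin (n + 1), ¬ Rh (f (u, g i)) (f (u, g i)) := by
      intro u
      by_contra hcon
      push_neg at hcon
      have hinj : ∀ i j : Fin (n + 1), f (u, g i) = f (u, g j) → i = j := by
        intro i j hij
        by_contra hne
        have hgij : g i ≠ g j := fun h => hne (hg h)
        have h := fwdV (u, g i) (u, g j) ⟨hgij, rfl⟩
        rw [hij] at h
        exact hirr _ (hcon j) h
      have hcard : n + 1 ≤ n := by
        have h' := Nat.card_le_card_of_injective
          (fun i : Fin (n + 1) => f (u, g i)) (fun i j hij => hinj i j hij)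
        simp at h'
        omega
      omega
    choose i hi using exK
    have Finj : Function.Injective
        (fun u : U => ((i u, f (u, g (i u))) : Fin (n + 1) × C)) := by
      intro u w h
      rw [Prod.mk.injEq] at h
      obtain ⟨h1', h2'⟩ := h
      by_contra hne
      rw [h1'] at h2'
      have h := fwdH (u, g (i w)) (w, g (i w)) ⟨hne, rfl⟩
      rw [h2'] at h
      exact hi w h
    exact Finite.of_injective _ Finj
  -- V is finite
  haveI finV : Finite V := by
    by_contra hinfV
    rw [not_finite_iff_infinite] at hinfV
    haveI := hinfV
    have hgV : Function.Injective
        (fun k : Fin (n + 1) => Infinite.natEmbedding V k.val) := by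
      intro k l h
      exact Fin.val_injective ((Infinite.natEmbedding V).injective h)
    haveI : Finite U := key _ hgV
    haveI : Finite (V × Bool) := Finite.of_injective _ F1inj
    haveI : Finite V :=
      Finite.of_injective (fun v : V => ((v, true) : V × Bool))
        (fun x y h => congrArg Prod.fst h)
    exact not_finite V
  haveI finU : Finite U := by
    haveI : Finite (U × Bool) := Finite.of_injective _ F2inj
    exact Finite.of_injective (fun u : U => ((u, true) : U × Bool))
      (fun x y h => congrArg Prod.fst h)
  -- cardinality contradiction
  have cV : 2 * Nat.card V ≤ Nat.card U := by
    have h' := Nat.card_le_card_of_injective _ F1inj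
    rw [Nat.card_prod] at h'
    simpa [mul_comm] using h'
  have cU : 2 * Nat.card U ≤ Nat.card V := by
    have h' := Nat.card_le_card_of_injective _ F2inj
    rw [Nat.card_prod] at h'
    simpa [mul_comm] using h'
  have hpos : 0 < Nat.card U := Nat.card_pos
  omega
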